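/- Let μ be a finite complex Borel measure on ℝ with compact support, and define m(ξ) := −μ([ξ,∞)) = −∫ 1_{(−∞,t]}(ξ) dμ(t), so that m is a compactly supported function of bounded variation. Then for every Schwartz function f on ℝ, every 0 < r < ∞, and every x ∈ ℝ, 𝒱^r( λ ↦ ℱ^{−1}( m(ξ−λ) f̂(ξ) )(x) ) ≤ ‖μ‖_{TV} · 𝒱^r( λ ↦ S_λ f(x) ), where ‖μ‖_{TV} is the total variation norm of μ. -/

import Mathlib

open MeasureTheory
open scoped ENNReal NNReal

/-- `e(t) = e^{2πit}`. -/
noncomputable def eC (t : ℝ) : ℂ := Complex.exp (2 * Real.pi * Complex.I * t)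

/-- The Fourier transform of a Schwartz function: `f̂(ξ) = ∫ f(y) e(-ξy) dy`. -/
noncomputable def fhat (f : SchwartzMap ℝ ℂ) (ξ : ℝ) : ℂ := ∫ y : ℝ, f y * eC (-(ξ * y))

/-- The `r`-variation of a family `λ ↦ g(λ)` of complex numbers (values in `ℝ≥0∞`):
the supremum of `(Σ_i |g(λ_{i+1}) - g(λ_i)|^r)^{1/r}` over finite increasing sequences. -/
noncomputable def rVar (r : ℝ) (g : ℝ → ℂ) : ℝ≥0∞ :=
  ⨆ (n : ℕ) (ls : Fin (n+1) → ℝ) (_ : StrictMono ls),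
    (∑ i : Fin n, (‖g (ls i.succ) - g (ls i.castSucc)‖₊ : ℝ≥0∞) ^ r) ^ (1/r)

lemma norm_eC (t : ℝ) : ‖eC t‖ = 1 := by
  have : (2 : ℂ) * Real.pi * Complex.I * t = (↑(2 * Real.pi * t) : ℂ) * Complex.I := by
    push_cast; ring
  rw [eC, this, Complex.norm_exp_ofReal_mul_I]

lemma continuous_eC : Continuous eC := by
  unfold eC; fun_prop

lemma fhat_eq_fourier (f : SchwartzMap ℝ ℂ) : fhat f = ⇑(SchwartzMap.fourierTransformCLM ℂ f) := by
  funext ξ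
  rw [SchwartzMap.fourierTransformCLM_apply, SchwartzMap.fourier_coe, Real.fourier_eq']
  unfold fhat
  congr 1
  funext y
  rw [smul_eq_mul, mul_comm]
  congr 1
  unfold eC
  congr 1
  have : (inner ℝ y ξ : ℝ) = y * ξ := Real.inner_apply y ξ
  rw [this]
  push_cast
  ring

lemma rVar_le_of_forall {r : ℝ} {g : ℝ → ℂ} {C : ℝ≥0∞}
    (H : ∀ (n : ℕ) (ls : Fin (n+1) → ℝ), StrictMono ls →
      (∑ i : Fin n, (‖g (ls i.succ) - g (ls i.castSucc)‖₊ : ℝ≥0∞) ^ r) ^ (1/r) ≤ C) :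
    rVar r g ≤ C := by
  unfold rVar
  exact iSup_le fun n => iSup_le fun ls => iSup_le fun hls => H n ls hls

lemma partition_le_rVar (r : ℝ) (g : ℝ → ℂ) {n : ℕ} (ls : Fin (n+1) → ℝ) (hls : StrictMono ls) :
    (∑ i : Fin n, (‖g (ls i.succ) - g (ls i.castSucc)‖₊ : ℝ≥0∞) ^ r) ^ (1/r) ≤ rVar r g := by
  unfold rVar
  exact le_iSup_of_le n (le_iSup_of_le ls (le_iSup_of_le hls le_rfl))

lemma rVar_eq_zero {r : ℝ} (hr : 0 < r) {g : ℝ → ℂ} (hg : ∀ u v : ℝ, g u = g v) :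
    rVar r g = 0 := by
  refine le_antisymm (rVar_le_of_forall fun n ls _ => ?_) zero_le
  have h0 : ∀ i : Fin n, (‖g (ls i.succ) - g (ls i.castSucc)‖₊ : ℝ≥0∞) ^ r = 0 := by
    intro i
    rw [hg (ls i.succ) (ls i.castSucc), sub_self]
    simp [ENNReal.zero_rpow_of_pos hr]
  rw [Finset.sum_congr rfl fun i _ => h0 i, Finset.sum_const_zero]
  exact le_of_eq (ENNReal.zero_rpow_of_pos (one_div_pos.mpr hr))

lemma sum_ofReal_rpow {n : ℕ} {r : ℝ} (hr : 0 < r) (v : Fin n → ℝ) (hv : ∀ i, 0 ≤ v i) :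
    (∑ i : Fin n, (ENNReal.ofReal (v i)) ^ r) ^ (1/r)
      = ENNReal.ofReal ((∑ i : Fin n, v i ^ r) ^ (1/r)) := by
  have h1 : ∀ i : Fin n, (ENNReal.ofReal (v i)) ^ r = ENNReal.ofReal (v i ^ r) := fun i =>
    ENNReal.ofReal_rpow_of_nonneg (hv i) hr.le
  rw [Finset.sum_congr rfl fun i _ => h1 i,
    ← ENNReal.ofReal_sum_of_nonneg (fun i _ => Real.rpow_nonneg (hv i) r),
    ENNReal.ofReal_rpow_of_nonneg (Finset.sum_nonneg fun i _ => Real.rpow_nonneg (hv i) r)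
      (one_div_nonneg.mpr hr.le)]

lemma minkowski_pi {n : ℕ} (ν : Measure ℝ) [IsFiniteMeasure ν] {r : ℝ} (hr1 : 1 ≤ r)
    (a : Fin n → ℝ → ℝ) (hcont : ∀ i, Continuous (a i)) (hnn : ∀ i t, 0 ≤ a i t)
    {C : ℝ} (hbd : ∀ t, (∑ i : Fin n, a i t ^ r) ^ (1/r) ≤ C) :
    (∑ i : Fin n, (∫ t, a i t ∂ν) ^ r) ^ (1/r) ≤ (ν Set.univ).toReal * C := by
  have hr0 : (0:ℝ) < r := lt_of_lt_of_le one_pos hr1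
  set p : ℝ≥0∞ := ENNReal.ofReal r with hp
  haveI : Fact (1 ≤ p) := ⟨ENNReal.one_le_ofReal.mpr hr1⟩
  have hpt : p.toReal = r := ENNReal.toReal_ofReal hr0.le
  let A : ℝ → PiLp p (fun _ : Fin n => ℝ) :=
    fun t => (PiLp.continuousLinearEquiv p ℝ (fun _ : Fin n => ℝ)).symm (fun i => a i t)
  have hAi : ∀ t i, A t i = a i t := fun t i => rfl
  have hAnorm : ∀ t, ‖A t‖ = (∑ i : Fin n, a i t ^ r) ^ (1/r) := by
    intro t
    rw [PiLp.norm_eq_sum (by rw [hpt]; exact hr0), hpt]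
    congr 1
    refine Finset.sum_congr rfl fun i _ => ?_
    rw [hAi, Real.norm_eq_abs, abs_of_nonneg (hnn i t)]
  have hAcont : Continuous A :=
    (PiLp.continuousLinearEquiv p ℝ (fun _ : Fin n => ℝ)).symm.continuous.comp
      (continuous_pi fun i => hcont i)
  have hAint : Integrable A ν := by
    refine (integrable_const C).mono' hAcont.aestronglyMeasurable (ae_of_all _ fun t => ?_)
    rw [hAnorm]; exact hbd t
  have hLi : ∀ i : Fin n, (∫ t, A t ∂ν) i = ∫ t, a i t ∂ν := by
    intro i
    let L : PiLp p (fun _ : Fin n => ℝ) →L[ℝ] ℝ :=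
      (ContinuousLinearMap.proj i).comp
        (PiLp.continuousLinearEquiv p ℝ (fun _ : Fin n => ℝ)).toContinuousLinearMap
    have := L.integral_comp_comm hAint
    exact this.symm
  calc (∑ i : Fin n, (∫ t, a i t ∂ν) ^ r) ^ (1/r) = ‖∫ t, A t ∂ν‖ := by
        rw [PiLp.norm_eq_sum (by rw [hpt]; exact hr0), hpt]
        congr 1
        refine Finset.sum_congr rfl fun i _ => ?_
        rw [hLi, Real.norm_eq_abs, abs_of_nonneg (integral_nonneg (hnn i))]
    _ ≤ ∫ t, ‖A t‖ ∂ν := norm_integral_le_integral_norm _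
    _ ≤ ∫ _, C ∂ν := by
        refine integral_mono hAint.norm (integrable_const C) fun t => ?_
        rw [hAnorm]; exact hbd t
    _ = (ν Set.univ).toReal * C := by simp [integral_const, smul_eq_mul, Measure.real]

lemma rVar_eq_top_of_continuous {r : ℝ} (hr : 0 < r) (hr1 : r < 1) {g : ℝ → ℂ}
    (hg : Continuous g) {a b : ℝ} (hab : a < b) (hne : g a ≠ g b) : rVar r g = ⊤ := by
  apply ENNReal.eq_top_of_forall_nnreal_le
  intro M
  set d : ℝ := ‖g b - g a‖ with hd
  have hd0 : 0 < d := by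
    rw [hd, norm_pos_iff, sub_ne_zero]
    exact fun e => hne e.symm
  set c : ℝ := ((M:ℝ) + 1) ^ r with hc
  have hM1 : (0:ℝ) < (M:ℝ) + 1 := by positivity
  have hc0 : 0 < c := Real.rpow_pos_of_pos hM1 r
  set ε : ℝ := (d / c) ^ (1 / (1 - r)) with hε
  have hdc : 0 < d / c := div_pos hd0 hc0
  have hε0 : 0 < ε := Real.rpow_pos_of_pos hdc _
  have h1r : (1:ℝ) - r ≠ 0 := by linarith
  have hεpow : ε ^ (r - 1) = c / d := by
    rw [hε, ← Real.rpow_mul hdc.le, show (1/(1-r))*(r-1) = -1 by field_simp; ring,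
      Real.rpow_neg_one, inv_div]
  have hεkey : ε ^ (r - 1) * d = c := by
    rw [hεpow]; field_simp
  -- uniform continuity on [a,b]
  have uc := (isCompact_Icc (a := a) (b := b)).uniformContinuousOn_of_continuous
    hg.continuousOn
  rw [Metric.uniformContinuousOn_iff] at uc
  obtain ⟨δ, hδ0, hδ⟩ := uc ε hε0
  obtain ⟨n, hn⟩ := exists_nat_gt ((b - a) / δ)
  have hba : (0:ℝ) < b - a := sub_pos.mpr hab
  have hn0 : (0:ℝ) < n := lt_of_le_of_lt (le_of_lt (div_pos hba hδ0)) hn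
  set s : ℝ := (b - a) / n with hs
  have hs0 : 0 < s := div_pos hba hn0
  have hsδ : s < δ := by
    rw [hs, div_lt_iff₀ hn0]
    have := (div_lt_iff₀ hδ0).mp hn
    nlinarith
  have hnsb : a + (n:ℝ) * s = b := by
    rw [hs]; field_simp; ring
  set ls : Fin (n+1) → ℝ := fun i => a + (i : ℕ) * s with hls_def
  have hls : StrictMono ls := by
    intro i j hij
    have : ((i:ℕ):ℝ) < ((j:ℕ):ℝ) := by exact_mod_cast hij
    simpa [hls_def] using mul_lt_mul_of_pos_right this hs0
  have hmem : ∀ k : Fin (n+1), ls k ∈ Set.Icc a b := by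
    intro k
    constructor
    · simp only [hls_def]
      nlinarith [Nat.cast_nonneg (α := ℝ) (k:ℕ)]
    · have hk : ((k:ℕ):ℝ) ≤ (n:ℝ) := by exact_mod_cast Fin.is_le k
      simp only [hls_def]
      nlinarith
  have hstep : ∀ i : Fin n, ls i.succ - ls i.castSucc = s := by
    intro i
    simp only [hls_def, Fin.val_succ, Fin.coe_castSucc]
    push_cast
    ring
  set q : Fin n → ℝ := fun i => ‖g (ls i.succ) - g (ls i.castSucc)‖ with hq
  have hqnn : ∀ i, 0 ≤ q i := fun i => norm_nonneg _
  have hqε : ∀ i, q i ≤ ε := by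
    intro i
    have hdist : dist (ls i.succ) (ls i.castSucc) < δ := by
      rw [Real.dist_eq, hstep i, abs_of_pos hs0]; exact hsδ
    have := hδ _ (hmem i.succ) _ (hmem i.castSucc) hdist
    rw [dist_eq_norm] at this
    exact this.le
  have htel : ∑ i : Fin n, (g (ls i.succ) - g (ls i.castSucc)) = g b - g a := by
    have : ∀ i : Fin n, g (ls i.succ) - g (ls i.castSucc)
        = (fun k : ℕ => g (a + k * s)) ((i:ℕ) + 1) - (fun k : ℕ => g (a + k * s)) (i:ℕ) := by
      intro i
      simp only [hls_def, Fin.val_succ, Fin.coe_castSucc]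
    rw [Finset.sum_congr rfl fun i _ => this i,
      Fin.sum_univ_eq_sum_range (fun k => (fun k : ℕ => g (a + k * s)) (k + 1)
        - (fun k : ℕ => g (a + k * s)) k) n,
      Finset.sum_range_sub (fun k : ℕ => g (a + k * s)) n]
    simp only [Nat.cast_zero, zero_mul, add_zero, hnsb]
  have hsumq : d ≤ ∑ i : Fin n, q i := by
    calc d = ‖∑ i : Fin n, (g (ls i.succ) - g (ls i.castSucc))‖ := by rw [htel]
      _ ≤ ∑ i : Fin n, q i := norm_sum_le _ _
  have hterm : ∀ i : Fin n, q i * ε ^ (r - 1) ≤ q i ^ r := by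
    intro i
    rcases eq_or_lt_of_le (hqnn i) with h0 | h0
    · rw [← h0, zero_mul, Real.zero_rpow hr.ne']
    · have h1 : ε ^ (r - 1) ≤ q i ^ (r - 1) :=
        Real.rpow_le_rpow_of_nonpos h0 (hqε i) (by linarith)
      calc q i * ε ^ (r - 1) ≤ q i * q i ^ (r - 1) :=
            mul_le_mul_of_nonneg_left h1 (hqnn i)
        _ = q i ^ r := by
            have e : q i ^ (1:ℝ) * q i ^ (r-1) = q i ^ (1 + (r-1)) :=
              (Real.rpow_add h0 1 (r-1)).symm
            rw [Real.rpow_one] at e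
            rw [e]
            norm_num
  have hsum : c ≤ ∑ i : Fin n, q i ^ r := by
    calc c = ε ^ (r - 1) * d := hεkey.symm
      _ ≤ ε ^ (r - 1) * ∑ i : Fin n, q i :=
          mul_le_mul_of_nonneg_left hsumq (Real.rpow_nonneg hε0.le _)
      _ = ∑ i : Fin n, q i * ε ^ (r - 1) := by rw [Finset.mul_sum]; congr 1; funext i; ring
      _ ≤ ∑ i : Fin n, q i ^ r := Finset.sum_le_sum fun i _ => hterm i
  refine le_trans ?_ (partition_le_rVar r g ls hls)
  have hconv : (∑ i : Fin n, (‖g (ls i.succ) - g (ls i.castSucc)‖₊ : ℝ≥0∞) ^ r) ^ (1/r)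
      = ENNReal.ofReal ((∑ i : Fin n, q i ^ r) ^ (1/r)) := by
    rw [← sum_ofReal_rpow hr q hqnn]
    congr 1
    refine Finset.sum_congr rfl fun i _ => ?_
    rw [hq]
    rw [ofReal_norm, enorm_eq_nnnorm]
  rw [hconv]
  have hfin : (M:ℝ) ≤ (∑ i : Fin n, q i ^ r) ^ (1/r) := by
    have h1 : ((M:ℝ) + 1) = c ^ (1/r) := by
      rw [hc, ← Real.rpow_mul hM1.le, mul_one_div_cancel hr.ne', Real.rpow_one]
    have h2 : c ^ (1/r) ≤ (∑ i : Fin n, q i ^ r) ^ (1/r) :=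
      Real.rpow_le_rpow hc0.le hsum (one_div_nonneg.mpr hr.le)
    nlinarith [h2, h1]
  calc (M : ℝ≥0∞) = ENNReal.ofReal (M:ℝ) := (ENNReal.ofReal_coe_nnreal).symm
    _ ≤ ENNReal.ofReal ((∑ i : Fin n, q i ^ r) ^ (1/r)) := ENNReal.ofReal_le_ofReal hfin

/-- Uraltsev's convexity lemma, variational form. A finite complex Borel measure `μ` of
compact support is encoded as `μ = h dν` with `ν` a finite compactly supported measure
and `‖h‖ = 1` pointwise, so that `‖μ‖_TV = ν(ℝ)` and `m(ξ) = -μ([ξ,∞))`. Then pointwise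
`𝒱^r(λ ↦ ℱ⁻¹(m(ξ-λ) f̂(ξ))(x)) ≤ ‖μ‖_TV · 𝒱^r(λ ↦ S_λ f(x))`. -/
theorem variation_truncation_convexity
    (ν : Measure ℝ) [IsFiniteMeasure ν]
    (hcomp : ∃ Kset : Set ℝ, IsCompact Kset ∧ ν Ksetᶜ = 0)
    (h : ℝ → ℂ) (hmeas : Measurable h) (hnorm : ∀ t, ‖h t‖ = 1)
    (f : SchwartzMap ℝ ℂ) (r : ℝ) (hr : 0 < r) (x : ℝ) :
    rVar r (fun lam => ∫ ξ : ℝ, (-(∫ t in Set.Ici (ξ - lam), h t ∂ν)) * fhat f ξ * eC (ξ * x))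
      ≤ ν Set.univ * rVar r (fun lam => ∫ ξ in Set.Iio lam, fhat f ξ * eC (ξ * x)) := by
  classical
  set φ : ℝ → ℂ := fun ξ => fhat f ξ * eC (ξ * x) with hφdef
  set G : ℝ → ℂ := fun u => ∫ ξ in Set.Iio u, φ ξ with hGdef
  set F : ℝ → ℂ :=
    fun lam => ∫ ξ : ℝ, (-(∫ t in Set.Ici (ξ - lam), h t ∂ν)) * fhat f ξ * eC (ξ * x) with hFdef
  -- basic facts about φ
  have hfc : Continuous (fhat f) := by
    rw [fhat_eq_fourier]; exact (SchwartzMap.fourierTransformCLM ℂ f).continuous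
  have hφc : Continuous φ :=
    hfc.mul (continuous_eC.comp (continuous_id.mul continuous_const))
  have hφi : Integrable φ := by
    have h1 : Integrable (fhat f) := by
      rw [fhat_eq_fourier]; exact SchwartzMap.integrable _
    have h2 : Integrable (fun ξ : ℝ => eC (ξ * x) * fhat f ξ) :=
      h1.bdd_mul (continuous_eC.comp (continuous_id.mul continuous_const)).aestronglyMeasurable
        (ae_of_all _ fun ξ => le_of_eq (norm_eC _))
    have h3 : (fun ξ : ℝ => eC (ξ * x) * fhat f ξ) = φ := by
      funext ξ; rw [hφdef]; ring
    rwa [h3] at h2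
  -- basic facts about G
  have hGIic : ∀ u : ℝ, G u = ∫ ξ in Set.Iic u, φ ξ := by
    intro u; rw [hGdef]; exact setIntegral_congr_set Iio_ae_eq_Iic
  have hGcont : Continuous G := by
    have heq : G = fun u => (∫ ξ in Set.Iic (0:ℝ), φ ξ) + ∫ ξ in (0:ℝ)..u, φ ξ := by
      funext u
      rw [hGIic u, ← intervalIntegral.integral_Iic_sub_Iic hφi.integrableOn hφi.integrableOn]
      ring
    rw [heq]
    exact continuous_const.add
      (intervalIntegral.continuous_primitive (fun a b => hφi.intervalIntegrable) 0)
  set B : ℝ := ∫ ξ, ‖φ ξ‖ with hBdef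
  have hGbd : ∀ u, ‖G u‖ ≤ B := by
    intro u
    rw [hGdef]
    exact (norm_integral_le_integral_norm _).trans
      (setIntegral_le_integral hφi.norm (ae_of_all _ fun ξ => norm_nonneg _))
  have hHas : ∀ lam : ℝ, AEStronglyMeasurable (fun t => h t * G (t + lam)) ν := fun lam =>
    hmeas.aestronglyMeasurable.mul
      ((hGcont.comp (continuous_id.add continuous_const)).aestronglyMeasurable)
  have hHint : ∀ lam : ℝ, Integrable (fun t => h t * G (t + lam)) ν := by
    intro lam
    refine (integrable_const B).mono' (hHas lam) (ae_of_all _ fun t => ?_)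
    rw [norm_mul, hnorm, one_mul]; exact hGbd _
  -- Fubini: F lam = -∫ t, h t * G (t + lam) dν
  have key : ∀ lam : ℝ, F lam = -∫ t, h t * G (t + lam) ∂ν := by
    intro lam
    have step1 : ∀ ξ : ℝ, (-(∫ t in Set.Ici (ξ - lam), h t ∂ν)) * fhat f ξ * eC (ξ * x)
        = -((∫ t, Set.indicator (Set.Ici (ξ - lam)) h t ∂ν) * φ ξ) := by
      intro ξ
      rw [integral_indicator measurableSet_Ici, hφdef]
      ring
    have hK : Integrable
        (Function.uncurry fun ξ t => Set.indicator (Set.Ici (ξ - lam)) h t * φ ξ)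
        ((volume : Measure ℝ).prod ν) := by
      have hb : Integrable (fun z : ℝ × ℝ => ‖φ z.1‖ * (1:ℝ)) (volume.prod ν) :=
        hφi.norm.mul_prod (integrable_const 1)
      refine Integrable.mono' (by simpa using hb) ?_ (ae_of_all _ fun z => ?_)
      · have hset : MeasurableSet {p : ℝ × ℝ | p.1 - lam ≤ p.2} :=
          measurableSet_le ((measurable_fst.sub measurable_const)) measurable_snd
        have hm : Measurable fun z : ℝ × ℝ => Set.indicator (Set.Ici (z.1 - lam)) h z.2 := by
          have : (fun z : ℝ × ℝ => Set.indicator (Set.Ici (z.1 - lam)) h z.2)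
              = Set.indicator {p : ℝ × ℝ | p.1 - lam ≤ p.2} (fun p => h p.2) := by
            funext z
            rw [Set.indicator_apply, Set.indicator_apply]
            simp only [Set.mem_Ici, Set.mem_setOf_eq]
          rw [this]
          exact (hmeas.comp measurable_snd).indicator hset
        exact (hm.mul (hφc.measurable.comp measurable_fst)).aestronglyMeasurable
      · simp only [Function.uncurry, norm_mul]
        have : ‖Set.indicator (Set.Ici (z.1 - lam)) h z.2‖ ≤ 1 := by
          rw [Set.indicator_apply]
          split_ifs
          · exact le_of_eq (hnorm _)
          · simp
        calc ‖Set.indicator (Set.Ici (z.1 - lam)) h z.2‖ * ‖φ z.1‖ ≤ 1 * ‖φ z.1‖ :=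
              mul_le_mul_of_nonneg_right this (norm_nonneg _)
          _ = ‖φ z.1‖ := one_mul _
    have inner_eq : ∀ t : ℝ,
        (∫ ξ : ℝ, Set.indicator (Set.Ici (ξ - lam)) h t * φ ξ) = h t * G (t + lam) := by
      intro t
      have hpt : ∀ ξ : ℝ, Set.indicator (Set.Ici (ξ - lam)) h t * φ ξ
          = Set.indicator (Set.Iic (t + lam)) (fun ξ => h t * φ ξ) ξ := by
        intro ξ
        rw [Set.indicator_apply, Set.indicator_apply]
        simp only [Set.mem_Ici, Set.mem_Iic]
        by_cases hcase : ξ - lam ≤ t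
        · rw [if_pos hcase, if_pos (by linarith)]
        · rw [if_neg hcase, if_neg (fun hh => hcase (by linarith)), zero_mul]
      simp only [hpt]
      rw [integral_indicator measurableSet_Iic, integral_const_mul, ← hGIic]
    calc F lam = ∫ ξ : ℝ, -((∫ t, Set.indicator (Set.Ici (ξ - lam)) h t ∂ν) * φ ξ) := by
          rw [hFdef]; exact integral_congr_ae (ae_of_all _ step1)
      _ = -∫ ξ : ℝ, (∫ t, Set.indicator (Set.Ici (ξ - lam)) h t ∂ν) * φ ξ := integral_neg _
      _ = -∫ ξ : ℝ, ∫ t, Set.indicator (Set.Ici (ξ - lam)) h t * φ ξ ∂ν := by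
          congr 1
          exact integral_congr_ae (ae_of_all _ fun ξ => (integral_mul_const _ _).symm)
      _ = -∫ t, (∫ ξ : ℝ, Set.indicator (Set.Ici (ξ - lam)) h t * φ ξ) ∂ν := by
          rw [integral_integral_swap hK]
      _ = -∫ t, h t * G (t + lam) ∂ν := by
          congr 1
          exact integral_congr_ae (ae_of_all _ inner_eq)
  -- difference bound
  have hFdiff : ∀ u v : ℝ, ‖F v - F u‖ ≤ ∫ t, ‖G (t + v) - G (t + u)‖ ∂ν := by
    intro u v
    rw [key u, key v]
    have e1 : -(∫ t, h t * G (t + v) ∂ν) - -(∫ t, h t * G (t + u) ∂ν)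
        = ∫ t, (h t * G (t + u) - h t * G (t + v)) ∂ν := by
      rw [integral_sub (hHint u) (hHint v)]; ring
    rw [e1]
    refine (norm_integral_le_integral_norm _).trans (le_of_eq (integral_congr_ae
      (ae_of_all _ fun t => ?_)))
    show ‖h t * G (t + u) - h t * G (t + v)‖ = ‖G (t + v) - G (t + u)‖
    rw [← mul_sub, norm_mul, hnorm, one_mul, norm_sub_rev]
  -- main case analysis
  by_cases hν0 : ν Set.univ = 0
  · have hν : ν = 0 := Measure.measure_univ_eq_zero.mp hν0
    have hF0 : ∀ u v : ℝ, F u = F v := by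
      intro u v
      rw [key u, key v, hν]
      simp
    rw [rVar_eq_zero hr hF0]
    exact zero_le
  by_cases hV : rVar r G = ⊤
  · rw [hV, ENNReal.mul_top hν0]
    exact le_top
  by_cases hr1 : 1 ≤ r
  · -- Minkowski case
    refine rVar_le_of_forall fun n ls hls => ?_
    set a : Fin n → ℝ → ℝ :=
      fun i t => ‖G (t + ls i.succ) - G (t + ls i.castSucc)‖ with hadef
    have hacont : ∀ i, Continuous (a i) := fun i =>
      ((hGcont.comp (continuous_id.add continuous_const)).sub
        (hGcont.comp (continuous_id.add continuous_const))).norm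
    have hann : ∀ i t, 0 ≤ a i t := fun i t => norm_nonneg _
    have hpt : ∀ t : ℝ, (∑ i : Fin n, a i t ^ r) ^ (1/r) ≤ (rVar r G).toReal := by
      intro t
      have hsls : StrictMono fun i : Fin (n+1) => t + ls i :=
        fun i j hij => by simpa using hls hij
      have hb := partition_le_rVar r G (fun i => t + ls i) hsls
      have hconv : (∑ i : Fin n, (‖G (t + ls i.succ) - G (t + ls i.castSucc)‖₊ : ℝ≥0∞) ^ r)
            ^ (1/r) = ENNReal.ofReal ((∑ i : Fin n, a i t ^ r) ^ (1/r)) := by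
        rw [← sum_ofReal_rpow hr (fun i => a i t) (fun i => hann i t)]
        congr 1
        refine Finset.sum_congr rfl fun i _ => ?_
        rw [ofReal_norm, enorm_eq_nnnorm]
      rw [hconv] at hb
      exact (ENNReal.ofReal_le_iff_le_toReal hV).mp hb
    have hmink := minkowski_pi ν hr1 a hacont hann hpt
    have hFi : ∀ i : Fin n, ‖F (ls i.succ) - F (ls i.castSucc)‖ ≤ ∫ t, a i t ∂ν :=
      fun i => hFdiff (ls i.castSucc) (ls i.succ)
    have hreal : (∑ i : Fin n, ‖F (ls i.succ) - F (ls i.castSucc)‖ ^ r) ^ (1/r)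
        ≤ (ν Set.univ).toReal * (rVar r G).toReal := by
      refine le_trans (Real.rpow_le_rpow (Finset.sum_nonneg fun i _ =>
        Real.rpow_nonneg (norm_nonneg _) r)
        (Finset.sum_le_sum fun i _ => Real.rpow_le_rpow (norm_nonneg _) (hFi i) hr.le)
        (one_div_nonneg.mpr hr.le)) hmink
    have hconv2 : (∑ i : Fin n, (‖F (ls i.succ) - F (ls i.castSucc)‖₊ : ℝ≥0∞) ^ r) ^ (1/r)
        = ENNReal.ofReal ((∑ i : Fin n, ‖F (ls i.succ) - F (ls i.castSucc)‖ ^ r) ^ (1/r)) := by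
      rw [← sum_ofReal_rpow hr (fun i => ‖F (ls i.succ) - F (ls i.castSucc)‖)
        (fun i => norm_nonneg _)]
      congr 1
      exact Finset.sum_congr rfl fun i _ => by rw [ofReal_norm, enorm_eq_nnnorm]
    rw [hconv2]
    calc ENNReal.ofReal ((∑ i : Fin n, ‖F (ls i.succ) - F (ls i.castSucc)‖ ^ r) ^ (1/r))
        ≤ ENNReal.ofReal ((ν Set.univ).toReal * (rVar r G).toReal) :=
          ENNReal.ofReal_le_ofReal hreal
      _ = ENNReal.ofReal (ν Set.univ).toReal * ENNReal.ofReal (rVar r G).toReal :=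
          ENNReal.ofReal_mul ENNReal.toReal_nonneg
      _ = ν Set.univ * rVar r G := by
          rw [ENNReal.ofReal_toReal (measure_ne_top ν _), ENNReal.ofReal_toReal hV]
  · -- r < 1 case
    push_neg at hr1
    by_cases hGc : ∀ u v : ℝ, G u = G v
    · have hF0 : ∀ u v : ℝ, F u = F v := by
        intro u v
        rw [key u, key v]
        congr 1
        refine integral_congr_ae (ae_of_all _ fun t => ?_)
        show h t * G (t + u) = h t * G (t + v)
        rw [hGc (t + u) (t + v)]
      rw [rVar_eq_zero hr hF0]
      exact zero_le
    · exfalso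
      push_neg at hGc
      obtain ⟨u, v, huv⟩ := hGc
      have huvne : u ≠ v := fun e => huv (by rw [e])
      rcases lt_or_gt_of_ne huvne with hlt | hgt
      · exact hV (rVar_eq_top_of_continuous hr hr1 hGcont hlt huv)
      · exact hV (rVar_eq_top_of_continuous hr hr1 hGcont hgt (fun e => huv e.symm))
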